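/- Let r ≥ 1, let (ϖ_1,…,ϖ_r) be a basis of Euclidean space ℝ^r, let R_+ be a finite family of m nonzero vectors in ℝ^r, let ρ ∈ ℝ^r satisfy ⟨ρ, α⟩ > 0 for all α ∈ R_+, and let ε > 0. For λ ∈ ℕ^r write λ̂ = ∑_i λ_i ϖ_i and l(λ) = ∑_i λ_i. Then there exists a constant K_2 > 0 such that for every λ ∈ ℕ^r with l(λ) ≥ 1 and ⟨λ̂, α⟩ ≥ ε·‖λ̂‖ for all α ∈ R_+, one has ∏_{α ∈ R_+} (1 + ⟨λ̂, α⟩/⟨ρ, α⟩) ≥ K_2 · l(λ)^m. -/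

import Mathlib

open RealInnerProductSpace

/-- Lower Weyl dimension estimate on the cone `C'`: `dim(λ) ≥ K₂ · l(λ)^m`. -/
theorem stmt_3 (r m : ℕ) (hr : 1 ≤ r)
    (ϖ : Module.Basis (Fin r) ℝ (EuclideanSpace ℝ (Fin r)))
    (α : Fin m → EuclideanSpace ℝ (Fin r))
    (hα : ∀ j : Fin m, α j ≠ 0)
    (ρ : EuclideanSpace ℝ (Fin r))
    (hρ : ∀ j : Fin m, 0 < ⟪ρ, α j⟫)
    (ε : ℝ) (hε : 0 < ε) :
    ∃ K₂ : ℝ, 0 < K₂ ∧ ∀ lam : Fin r → ℕ, 1 ≤ ∑ i, lam i →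
      (∀ j : Fin m, ε * ‖∑ i, (lam i : ℝ) • ϖ i‖ ≤ ⟪∑ i, (lam i : ℝ) • ϖ i, α j⟫) →
      K₂ * ((∑ i, lam i : ℕ) : ℝ) ^ m
        ≤ ∏ j, (1 + ⟪∑ i, (lam i : ℝ) • ϖ i, α j⟫ / ⟪ρ, α j⟫) := by
  -- comparison of norms: l(λ) ≤ C ‖λ̂‖
  set e := ϖ.equivFunL
  set C : ℝ := r * ‖(e : EuclideanSpace ℝ (Fin r) →L[ℝ] (Fin r → ℝ))‖ + 1 with hC
  have hCpos : 0 < C := by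
    have : (0:ℝ) ≤ r * ‖(e : EuclideanSpace ℝ (Fin r) →L[ℝ] (Fin r → ℝ))‖ :=
      mul_nonneg (by positivity) (norm_nonneg _)
    linarith
  have key : ∀ lam : Fin r → ℕ,
      ((∑ i, lam i : ℕ) : ℝ) ≤ C * ‖∑ i, (lam i : ℝ) • ϖ i‖ := by
    intro lam
    set v := ∑ i, (lam i : ℝ) • ϖ i with hv
    have hrepr : e v = fun i => (lam i : ℝ) := by
      have h := ϖ.repr_sum_self fun i => (lam i : ℝ)
      funext i
      show ϖ.equivFun v i = _
      rw [Module.Basis.equivFun_apply, hv]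
      exact congrFun h i
    have hle : ∀ i, (lam i : ℝ) ≤ ‖e v‖ := by
      intro i
      have := norm_le_pi_norm (e v) i
      rw [hrepr] at this ⊢
      exact le_trans (le_abs_self _) this
    calc ((∑ i, lam i : ℕ) : ℝ) = ∑ i, (lam i : ℝ) := by push_cast; ring
      _ ≤ ∑ _i : Fin r, ‖e v‖ := Finset.sum_le_sum fun i _ => hle i
      _ = r * ‖e v‖ := by simp [mul_comm]
      _ ≤ r * (‖(e : EuclideanSpace ℝ (Fin r) →L[ℝ] (Fin r → ℝ))‖ * ‖v‖) := by
          exact mul_le_mul_of_nonneg_left ((e : EuclideanSpace ℝ (Fin r) →L[ℝ] (Fin r → ℝ)).le_opNorm v) (by positivity)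
      _ ≤ C * ‖v‖ := by
          rw [hC]
          have := norm_nonneg v
          nlinarith
  refine ⟨∏ j, ε / (C * ⟪ρ, α j⟫), Finset.prod_pos fun j _ => div_pos hε (mul_pos hCpos (hρ j)), ?_⟩
  intro lam hl hcone
  set v := ∑ i, (lam i : ℝ) • ϖ i with hv
  set l : ℝ := ((∑ i, lam i : ℕ) : ℝ) with hldef
  have hl1 : (1:ℝ) ≤ l := by rw [hldef]; exact_mod_cast hl
  have hlC : l ≤ C * ‖v‖ := key lam
  have hfac : ∀ j : Fin m, ε / (C * ⟪ρ, α j⟫) * l ≤ 1 + ⟪v, α j⟫ / ⟪ρ, α j⟫ := by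
    intro j
    have h1 : ε * l ≤ ε * (C * ‖v‖) := mul_le_mul_of_nonneg_left hlC hε.le
    have h2 : ε * ‖v‖ ≤ ⟪v, α j⟫ := hcone j
    have hρj := hρ j
    have : ε / (C * ⟪ρ, α j⟫) * l ≤ ⟪v, α j⟫ / ⟪ρ, α j⟫ := by
      rw [div_mul_eq_mul_div, div_le_div_iff₀ (by positivity) hρj]
      nlinarith [mul_le_mul_of_nonneg_right h1 hρj.le,
        mul_le_mul_of_nonneg_right h2 (mul_nonneg hCpos.le hρj.le)]
    linarith
  calc (∏ j, ε / (C * ⟪ρ, α j⟫)) * l ^ m = ∏ j, (ε / (C * ⟪ρ, α j⟫) * l) := by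
        rw [Finset.prod_mul_distrib]; simp
    _ ≤ ∏ j, (1 + ⟪v, α j⟫ / ⟪ρ, α j⟫) :=
        Finset.prod_le_prod (fun j _ => mul_nonneg (div_pos hε (mul_pos hCpos (hρ j))).le (by linarith)) (fun j _ => hfac j)
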